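/- Consider the multi-input system x_{k+1} = A_k x_k + Σ_{i=1}^N B_{k,i} u_{k,i} over a finite horizon M, with inputs generated by the distributed controller with virtual dynamics initialized at x_{0,i} = x_0/N. Assume the communication setup with a strongly connected directed graph, the boundedness assumption, and the joint controllability assumption. Then the achieved cost J_M = x_M^T Q_M x_M + Σ_{k=0}^{M−1} ( x_k^T Q_k x_k + Σ_{i=1}^N u_{k,i}^T R_{k,i} u_{k,i} ) satisfies J_M ≤ (1/N^2) Σ_{i=1}^N x_0^T P̆_{0,i} x_0. -/

import Mathlib

open Matrix Finset

/-- For symmetric matrices, `loewnerLE X Y` means `X ≤ Y` in the Loewner order. -/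
def loewnerLE {p : ℕ} (X Y : Matrix (Fin p) (Fin p) ℝ) : Prop := (Y - X).PosSemidef

/-- The spectral (2-)norm of a real matrix. -/
noncomputable def spec2Norm {p q : ℕ} (A : Matrix (Fin p) (Fin q) ℝ) : ℝ :=
  ‖LinearMap.toContinuousLinearMap (Matrix.toEuclideanLin A)‖

/-- The state transition matrix `Φ_{k+h−1,k} = A_{k+h−1} ⋯ A_k` (`= I` for `h = 0`). -/
noncomputable def PhiTrans {n : ℕ} (A : ℕ → Matrix (Fin n) (Fin n) ℝ) (k : ℕ) :
    ℕ → Matrix (Fin n) (Fin n) ℝ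
  | 0 => 1
  | h + 1 => A (k + h) * PhiTrans A k h


section DLQRaux

variable {p q : ℕ}

private lemma psd_dot {S : Matrix (Fin p) (Fin p) ℝ} (h : S.PosSemidef) (x : Fin p → ℝ) :
    0 ≤ x ⬝ᵥ S *ᵥ x := by simpa using h.dotProduct_mulVec_nonneg x

private lemma pd_dot {S : Matrix (Fin p) (Fin p) ℝ} (h : S.PosDef) {x : Fin p → ℝ}
    (hx : x ≠ 0) : 0 < x ⬝ᵥ S *ᵥ x := by simpa using h.dotProduct_mulVec_pos hx

private lemma herm_tr {S : Matrix (Fin p) (Fin p) ℝ} (h : S.IsHermitian) : Sᵀ = S := by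
  rw [Matrix.IsHermitian, Matrix.conjTranspose_eq_transpose_of_trivial] at h; exact h

private lemma pd_unit {S : Matrix (Fin p) (Fin p) ℝ} (h : S.PosDef) : IsUnit S.det :=
  isUnit_iff_ne_zero.2 h.det_pos.ne'

private lemma inv_tr_pd {S : Matrix (Fin p) (Fin p) ℝ} (h : S.PosDef) : (S⁻¹)ᵀ = S⁻¹ := by
  rw [Matrix.transpose_nonsing_inv, herm_tr h.1]

private lemma dot_sum_right {ι : Type*} (s : Finset ι) (x : Fin p → ℝ) (f : ι → Fin p → ℝ) :
    x ⬝ᵥ (∑ j ∈ s, f j) = ∑ j ∈ s, x ⬝ᵥ f j := by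
  simp only [dotProduct, Finset.sum_apply, Finset.mul_sum]
  exact Finset.sum_comm

private lemma sum_dot_left {ι : Type*} (s : Finset ι) (x : Fin p → ℝ) (f : ι → Fin p → ℝ) :
    (∑ j ∈ s, f j) ⬝ᵥ x = ∑ j ∈ s, f j ⬝ᵥ x := by
  simp only [dotProduct, Finset.sum_apply, Finset.sum_mul]
  exact Finset.sum_comm

private lemma mulVec_sum' {ι : Type*} (s : Finset ι) (S : Matrix (Fin p) (Fin q) ℝ)
    (f : ι → Fin q → ℝ) : S *ᵥ (∑ j ∈ s, f j) = ∑ j ∈ s, S *ᵥ f j :=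
  map_sum (Matrix.mulVecLin S) f s

private lemma sum_mulVec' {ι : Type*} (s : Finset ι) (Mf : ι → Matrix (Fin p) (Fin q) ℝ)
    (v : Fin q → ℝ) : (∑ j ∈ s, Mf j) *ᵥ v = ∑ j ∈ s, Mf j *ᵥ v := by
  ext l
  simp only [Matrix.mulVec, dotProduct, Matrix.sum_apply, Finset.sum_apply, Finset.sum_mul]
  exact Finset.sum_comm

private lemma conj_dot (Bm : Matrix (Fin p) (Fin q) ℝ) (S : Matrix (Fin p) (Fin p) ℝ)
    (x y : Fin q → ℝ) :
    (Bm *ᵥ x) ⬝ᵥ (S *ᵥ (Bm *ᵥ y)) = x ⬝ᵥ ((Bmᵀ * S * Bm) *ᵥ y) := by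
  rw [← Matrix.mulVec_mulVec, ← Matrix.mulVec_mulVec, Matrix.dotProduct_mulVec x,
    Matrix.vecMul_transpose]

private lemma dot_self_pos {x : Fin p → ℝ} (hx : x ≠ 0) : 0 < x ⬝ᵥ x := by
  have h0 : 0 ≤ x ⬝ᵥ x := Finset.sum_nonneg fun i _ => mul_self_nonneg _
  refine h0.lt_of_ne fun h => hx ?_
  exact (dotProduct_self_eq_zero).1 h.symm

private lemma pd_of_le {c : ℝ} (hc : 0 < c) {S : Matrix (Fin p) (Fin p) ℝ}
    (h : (S - c • (1 : Matrix (Fin p) (Fin p) ℝ)).PosSemidef) : S.PosDef := by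
  refine Matrix.PosDef.of_dotProduct_mulVec_pos ?_ ?_
  · have h1 := h.1
    have h2 : (c • (1 : Matrix (Fin p) (Fin p) ℝ)).IsHermitian := by
      rw [Matrix.IsHermitian, Matrix.conjTranspose_smul]
      simp
    have h3 := h1.add h2
    have h4 : S - c • (1 : Matrix (Fin p) (Fin p) ℝ) + c • (1 : Matrix (Fin p) (Fin p) ℝ) = S := by
      abel
    rwa [h4] at h3
  · intro y hy
    have h2 := psd_dot h y
    have h3 : y ⬝ᵥ ((S - c • (1 : Matrix (Fin p) (Fin p) ℝ)) *ᵥ y)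
        = y ⬝ᵥ (S *ᵥ y) - c * (y ⬝ᵥ y) := by
      rw [Matrix.sub_mulVec, dotProduct_sub, Matrix.smul_mulVec,
        Matrix.one_mulVec, dotProduct_smul, smul_eq_mul]
    have h4 : 0 < y ⬝ᵥ y := dot_self_pos hy
    have h5 : 0 < c * (y ⬝ᵥ y) := mul_pos hc h4
    simp only [star_trivial]
    linarith [h2, h3.symm.le, h3.le]

private lemma pd_smul {c : ℝ} (hc : 0 < c) {S : Matrix (Fin p) (Fin p) ℝ} (h : S.PosDef) :
    (c • S).PosDef := by
  refine Matrix.PosDef.of_dotProduct_mulVec_pos ?_ ?_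
  · have h1 := h.1
    rw [Matrix.IsHermitian] at h1 ⊢
    rw [Matrix.conjTranspose_smul, h1, star_trivial]
  · intro y hy
    simp only [star_trivial, Matrix.smul_mulVec, dotProduct_smul, smul_eq_mul]
    exact mul_pos hc (pd_dot h hy)

private lemma pd_conj {S : Matrix (Fin p) (Fin p) ℝ} (hS : S.PosDef)
    {Am : Matrix (Fin p) (Fin p) ℝ} (hA : IsUnit Am.det) : (Amᵀ * S * Am).PosDef := by
  refine Matrix.PosDef.of_dotProduct_mulVec_pos ?_ ?_
  · have h1 := Matrix.isHermitian_conjTranspose_mul_mul Am hS.1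
    rwa [Matrix.conjTranspose_eq_transpose_of_trivial] at h1
  · intro y hy
    have hAy : Am *ᵥ y ≠ 0 := by
      intro hc
      have h2 : Am⁻¹ *ᵥ (Am *ᵥ y) = 0 := by rw [hc]; simp
      rw [Matrix.mulVec_mulVec, Matrix.nonsing_inv_mul Am hA, Matrix.one_mulVec] at h2
      exact hy h2
    simp only [star_trivial]
    rw [← conj_dot]
    exact pd_dot hS hAy

private lemma psd_BRB {Rm : Matrix (Fin q) (Fin q) ℝ} (hR : Rm.PosDef)
    (B : Matrix (Fin p) (Fin q) ℝ) : (B * Rm⁻¹ * Bᵀ).PosSemidef := by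
  have h := (hR.inv.posSemidef).mul_mul_conjTranspose_same B
  rwa [Matrix.conjTranspose_eq_transpose_of_trivial] at h

private lemma pd_sum {ι : Type*} {s : Finset ι} (hs : s.Nonempty) (c : ι → ℝ)
    (hc : ∀ j ∈ s, 0 < c j) {f : ι → Matrix (Fin p) (Fin p) ℝ}
    (hf : ∀ j ∈ s, (f j).PosDef) : (∑ j ∈ s, c j • f j).PosDef := by
  refine Matrix.PosDef.of_dotProduct_mulVec_pos ?_ ?_
  · rw [Matrix.IsHermitian, Matrix.conjTranspose_sum]
    refine Finset.sum_congr rfl fun j hj => ?_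
    rw [Matrix.conjTranspose_smul, star_trivial, (hf j hj).1.eq]
  · intro y hy
    simp only [star_trivial]
    rw [sum_mulVec', dot_sum_right]
    refine Finset.sum_pos ?_ hs
    intro j hj
    rw [Matrix.smul_mulVec, dotProduct_smul, smul_eq_mul]
    exact mul_pos (hc j hj) (pd_dot (hf j hj) hy)

private lemma dot_symm {S : Matrix (Fin p) (Fin p) ℝ} (hS : Sᵀ = S) (x y : Fin p → ℝ) :
    x ⬝ᵥ (S *ᵥ y) = y ⬝ᵥ (S *ᵥ x) := by
  rw [Matrix.dotProduct_mulVec, ← Matrix.mulVec_transpose, hS]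
  exact dotProduct_comm _ _

private lemma wcs {ι : Type*} (s : Finset ι) (c : ι → ℝ) (hc : ∀ j ∈ s, 0 ≤ c j)
    {S : Matrix (Fin p) (Fin p) ℝ} (hS : S.PosSemidef) (v : ι → Fin p → ℝ) :
    (∑ j ∈ s, c j • v j) ⬝ᵥ (S *ᵥ (∑ j ∈ s, c j • v j))
      ≤ (∑ j ∈ s, c j) * ∑ j ∈ s, c j * (v j ⬝ᵥ (S *ᵥ v j)) := by
  have hSt : Sᵀ = S := herm_tr hS.1
  have key : ∀ a ∈ s, ∀ b ∈ s,
      (c a * c b) * (v a ⬝ᵥ (S *ᵥ v b))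
        ≤ (c a * c b) * ((v a ⬝ᵥ (S *ᵥ v a) + v b ⬝ᵥ (S *ᵥ v b)) / 2) := by
    intro a ha b hb
    refine mul_le_mul_of_nonneg_left ?_ (mul_nonneg (hc a ha) (hc b hb))
    have h0 := psd_dot hS (v a - v b)
    have h1 : (v a - v b) ⬝ᵥ (S *ᵥ (v a - v b))
        = v a ⬝ᵥ (S *ᵥ v a) - v a ⬝ᵥ (S *ᵥ v b) - v b ⬝ᵥ (S *ᵥ v a)
          + v b ⬝ᵥ (S *ᵥ v b) := by
      rw [Matrix.mulVec_sub, sub_dotProduct, dotProduct_sub,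
        dotProduct_sub]
      ring
    have h2 := dot_symm hSt (v a) (v b)
    linarith
  calc (∑ j ∈ s, c j • v j) ⬝ᵥ (S *ᵥ (∑ j ∈ s, c j • v j))
      = ∑ a ∈ s, ∑ b ∈ s, (c a * c b) * (v a ⬝ᵥ (S *ᵥ v b)) := by
        rw [sum_dot_left]
        refine Finset.sum_congr rfl fun a ha => ?_
        rw [mulVec_sum', dot_sum_right]
        refine Finset.sum_congr rfl fun b hb => ?_
        rw [Matrix.mulVec_smul, dotProduct_smul, smul_dotProduct,
          smul_eq_mul, smul_eq_mul]
        ring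
    _ ≤ ∑ a ∈ s, ∑ b ∈ s, (c a * c b) * ((v a ⬝ᵥ (S *ᵥ v a) + v b ⬝ᵥ (S *ᵥ v b)) / 2) :=
        Finset.sum_le_sum fun a ha => Finset.sum_le_sum fun b hb => key a ha b hb
    _ = (∑ j ∈ s, c j) * ∑ j ∈ s, c j * (v j ⬝ᵥ (S *ᵥ v j)) := by
        have e : ∀ a ∈ s, ∑ b ∈ s, (c a * c b) * ((v a ⬝ᵥ (S *ᵥ v a) + v b ⬝ᵥ (S *ᵥ v b)) / 2)
            = c a * (v a ⬝ᵥ (S *ᵥ v a)) / 2 * (∑ b ∈ s, c b)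
              + c a / 2 * (∑ b ∈ s, c b * (v b ⬝ᵥ (S *ᵥ v b))) := by
          intro a ha
          rw [Finset.mul_sum, Finset.mul_sum, ← Finset.sum_add_distrib]
          refine Finset.sum_congr rfl fun b hb => by ring
        rw [Finset.sum_congr rfl e, Finset.sum_add_distrib, ← Finset.sum_mul, ← Finset.sum_mul,
          ← Finset.sum_div, ← Finset.sum_div]
        ring

private lemma peragent {P : Matrix (Fin p) (Fin p) ℝ} (hP : P.PosDef)
    {Rm : Matrix (Fin q) (Fin q) ℝ} (hR : Rm.PosDef) (B : Matrix (Fin p) (Fin q) ℝ)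
    (w : Fin p → ℝ) (uu : Fin q → ℝ)
    (huu : uu = (-((Rm + Bᵀ * P * B)⁻¹ * (Bᵀ * P))) *ᵥ ((P⁻¹ + B * Rm⁻¹ * Bᵀ) *ᵥ w)) :
    uu ⬝ᵥ (Rm *ᵥ uu)
      + (((P⁻¹ + B * Rm⁻¹ * Bᵀ) *ᵥ w) + B *ᵥ uu) ⬝ᵥ
          (P *ᵥ (((P⁻¹ + B * Rm⁻¹ * Bᵀ) *ᵥ w) + B *ᵥ uu))
      = w ⬝ᵥ ((P⁻¹ + B * Rm⁻¹ * Bᵀ) *ᵥ w) := by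
  have hSpd : (Rm + Bᵀ * P * B).PosDef := by
    refine hR.add_posSemidef ?_
    have h := (hP.posSemidef).conjTranspose_mul_mul_same B
    rwa [Matrix.conjTranspose_eq_transpose_of_trivial] at h
  have hRu := pd_unit hR
  have hPu := pd_unit hP
  have hSu := pd_unit hSpd
  have I1 : Bᵀ * P * (P⁻¹ + B * Rm⁻¹ * Bᵀ) = (Rm + Bᵀ * P * B) * (Rm⁻¹ * Bᵀ) := by
    rw [Matrix.mul_add, Matrix.add_mul]
    congr 1
    · rw [Matrix.mul_assoc Bᵀ P P⁻¹, Matrix.mul_nonsing_inv P hPu, Matrix.mul_one,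
        ← Matrix.mul_assoc Rm Rm⁻¹ Bᵀ, Matrix.mul_nonsing_inv Rm hRu, Matrix.one_mul]
    · simp only [Matrix.mul_assoc]
  have I2 : (-((Rm + Bᵀ * P * B)⁻¹ * (Bᵀ * P))) * (P⁻¹ + B * Rm⁻¹ * Bᵀ)
      = -(Rm⁻¹ * Bᵀ) := by
    rw [Matrix.neg_mul, neg_inj, Matrix.mul_assoc, I1,
      ← Matrix.mul_assoc, Matrix.nonsing_inv_mul _ hSu, Matrix.one_mul]
  have hu2 : uu = -((Rm⁻¹ * Bᵀ) *ᵥ w) := by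
    rw [huu, Matrix.mulVec_mulVec, I2, Matrix.neg_mulVec]
  have hx2 : ((P⁻¹ + B * Rm⁻¹ * Bᵀ) *ᵥ w) + B *ᵥ uu = P⁻¹ *ᵥ w := by
    rw [hu2, Matrix.mulVec_neg, Matrix.mulVec_mulVec, ← sub_eq_add_neg, ← Matrix.sub_mulVec]
    have h : P⁻¹ + B * Rm⁻¹ * Bᵀ - B * (Rm⁻¹ * Bᵀ) = P⁻¹ := by
      rw [← Matrix.mul_assoc]
      exact add_sub_cancel_right _ _
    rw [h]
  rw [hx2, hu2]
  have e1 : (-((Rm⁻¹ * Bᵀ) *ᵥ w)) ⬝ᵥ (Rm *ᵥ (-((Rm⁻¹ * Bᵀ) *ᵥ w)))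
      = w ⬝ᵥ ((B * Rm⁻¹ * Bᵀ) *ᵥ w) := by
    rw [Matrix.mulVec_neg, neg_dotProduct, dotProduct_neg, neg_neg, conj_dot]
    have h : (Rm⁻¹ * Bᵀ)ᵀ * Rm * (Rm⁻¹ * Bᵀ) = B * Rm⁻¹ * Bᵀ := by
      rw [Matrix.transpose_mul, Matrix.transpose_transpose, inv_tr_pd hR,
        Matrix.mul_assoc (B * Rm⁻¹) Rm _, ← Matrix.mul_assoc Rm Rm⁻¹ Bᵀ,
        Matrix.mul_nonsing_inv Rm hRu, Matrix.one_mul]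
    rw [h]
  have e2 : (P⁻¹ *ᵥ w) ⬝ᵥ (P *ᵥ (P⁻¹ *ᵥ w)) = w ⬝ᵥ (P⁻¹ *ᵥ w) := by
    rw [conj_dot]
    have h : (P⁻¹)ᵀ * P * P⁻¹ = P⁻¹ := by
      rw [inv_tr_pd hP, Matrix.mul_assoc, Matrix.mul_nonsing_inv P hPu, Matrix.mul_one]
    rw [h]
  rw [e1, e2, Matrix.add_mulVec, dotProduct_add]
  ring

end DLQRaux


/-- Theorem 2 of the paper: for the multi-input system driven by the fully distributed
LQR-based controller (built from the backward recursion and the virtual dynamics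
initialized at `x_{0,i} = x_0/N`), under strong connectivity, boundedness and joint
controllability, the achieved finite-horizon cost satisfies
`J_M ≤ (1/N²) Σ_i x_0ᵀ P̆_{0,i} x_0`. -/
theorem distributed_lqr_cost_bound {n N : ℕ} (hN : 0 < N) (m : Fin N → ℕ)
    (nbr : Fin N → Finset (Fin N)) (hself : ∀ i, i ∈ nbr i)
    (hconn : ∀ i j : Fin N, ∃ l : ℕ, 0 < l ∧
      0 < (((Matrix.of fun a b => if b ∈ nbr a then (1 : ℝ) else 0) :
        Matrix (Fin N) (Fin N) ℝ) ^ l) i j)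
    (ω : Fin N → Fin N → ℝ)
    (hω : ∀ i, ∀ j ∈ nbr i, 0 < ω i j ∧
      ω i j ≤ 1 / ((Finset.univ.filter (fun l => j ∈ nbr l)).card : ℝ))
    (M : ℕ) (hM : 0 < M)
    (A : ℕ → Matrix (Fin n) (Fin n) ℝ)
    (B : ∀ _ : ℕ, ∀ i : Fin N, Matrix (Fin n) (Fin (m i)) ℝ)
    (Q : ℕ → Matrix (Fin n) (Fin n) ℝ)
    (R : ∀ _ : ℕ, ∀ i : Fin N, Matrix (Fin (m i)) (Fin (m i)) ℝ)
    (κA1 κA2 κB κQ1 κQ2 κR1 κR2 : ℝ)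
    (hκA1 : 0 < κA1) (hκA2 : 0 < κA2) (hκB : 0 < κB) (hκQ1 : 0 < κQ1)
    (hκQ2 : 0 < κQ2) (hκR1 : 0 < κR1) (hκR2 : 0 < κR2)
    (hAinv : ∀ k, IsUnit (A k).det)
    (hAbd : ∀ k, κA1 ≤ spec2Norm (A k) ∧ spec2Norm (A k) ≤ κA2)
    (hBbd : ∀ k i, spec2Norm (B k i) ≤ κB)
    (hQbd : ∀ k, loewnerLE (κQ1 • (1 : Matrix (Fin n) (Fin n) ℝ)) (Q k) ∧
      loewnerLE (Q k) (κQ2 • (1 : Matrix (Fin n) (Fin n) ℝ)))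
    (hRbd : ∀ k i, loewnerLE (κR1 • (1 : Matrix (Fin (m i)) (Fin (m i)) ℝ)) (R k i) ∧
      loewnerLE (R k i) (κR2 • (1 : Matrix (Fin (m i)) (Fin (m i)) ℝ)))
    (η : ℝ) (hη : 0 < η) (L : ℕ) (hL : 0 < L)
    (hJC : ∀ k, ((∑ h ∈ Finset.range L,
        PhiTrans A k h * (∑ i, B (k + h) i * (R (k + h) i)⁻¹ * (B (k + h) i)ᵀ) *
          (PhiTrans A k h)ᵀ)
      - η • (1 : Matrix (Fin n) (Fin n) ℝ)).PosSemidef)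
    (Pbar Pm Pbrv : ℕ → Fin N → Matrix (Fin n) (Fin n) ℝ)
    (hPbrvM : ∀ i, Pbrv M i = (N : ℝ) • Q M)
    (hPbar : ∀ k < M, ∀ i,
      Pbar (k+1) i = ((Pbrv (k+1) i)⁻¹ + B k i * (R k i)⁻¹ * (B k i)ᵀ)⁻¹)
    (hPm : ∀ k < M, ∀ i, Pm (k+1) i = (∑ j ∈ nbr i, ω i j • (Pbar (k+1) j)⁻¹)⁻¹)
    (hPbrv : ∀ k < M, ∀ i, Pbrv k i = (A k)ᵀ * Pm (k+1) i * A k + (N : ℝ) • Q k)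
    (x : ℕ → Fin n → ℝ) (xv : ℕ → Fin N → Fin n → ℝ)
    (u : ∀ _ : ℕ, ∀ i : Fin N, Fin (m i) → ℝ)
    (hx : ∀ k < M, x (k+1) = A k *ᵥ x k + ∑ i, B k i *ᵥ u k i)
    (hxv0 : ∀ i, xv 0 i = (N : ℝ)⁻¹ • x 0)
    (hxv : ∀ k < M, ∀ i, xv (k+1) i =
      (∑ j ∈ Finset.univ.filter (fun j => i ∈ nbr j),
        ω j i • ((Pbar (k+1) i)⁻¹ *ᵥ (Pm (k+1) j *ᵥ (A k *ᵥ xv k j))))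
      + B k i *ᵥ u k i)
    (hu : ∀ k < M, ∀ i, u k i =
      (-((R k i + (B k i)ᵀ * Pbrv (k+1) i * B k i)⁻¹ * ((B k i)ᵀ * Pbrv (k+1) i))) *ᵥ
      (∑ j ∈ Finset.univ.filter (fun j => i ∈ nbr j),
        ω j i • ((Pbar (k+1) i)⁻¹ *ᵥ (Pm (k+1) j *ᵥ (A k *ᵥ xv k j))))) :
    x M ⬝ᵥ (Q M *ᵥ x M)
      + ∑ k ∈ Finset.range M, (x k ⬝ᵥ (Q k *ᵥ x k) + ∑ i, u k i ⬝ᵥ (R k i *ᵥ u k i))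
    ≤ (1 / (N : ℝ) ^ 2) * ∑ i, x 0 ⬝ᵥ (Pbrv 0 i *ᵥ x 0) := by
  
  classical
  have hNpos : (0:ℝ) < N := by exact_mod_cast hN
  have hNne : (N:ℝ) ≠ 0 := ne_of_gt hNpos
  have hQpd : ∀ k, (Q k).PosDef := fun k => pd_of_le hκQ1 (hQbd k).1
  have hRpd : ∀ k i, (R k i).PosDef := fun k i => pd_of_le hκR1 (hRbd k i).1
  -- positive definiteness of the backward recursion, by downward induction
  have hPbrvPDaux : ∀ d k, k + d = M → ∀ i, (Pbrv k i).PosDef := by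
    intro d
    induction d with
    | zero =>
      intro k hk i
      have hkM : k = M := by omega
      rw [hkM, hPbrvM i]
      exact pd_smul hNpos (hQpd M)
    | succ d ih =>
      intro k hk i
      have hkM : k < M := by omega
      have ih' : ∀ j, (Pbrv (k+1) j).PosDef := fun j => ih (k+1) (by omega) j
      have hPbarPD : ∀ j, (Pbar (k+1) j).PosDef := fun j => by
        rw [hPbar k hkM j]
        exact ((ih' j).inv.add_posSemidef (psd_BRB (hRpd k j) (B k j))).inv
      have hsumPD : (∑ j ∈ nbr i, ω i j • (Pbar (k+1) j)⁻¹).PosDef :=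
        pd_sum ⟨i, hself i⟩ (ω i) (fun j hj => (hω i j hj).1) fun j hj => (hPbarPD j).inv
      rw [hPbrv k hkM i]
      refine (pd_conj ?_ (hAinv k)).add_posSemidef (pd_smul hNpos (hQpd k)).posSemidef
      rw [hPm k hkM i]
      exact hsumPD.inv
  have hPbrvPD : ∀ k, k ≤ M → ∀ i, (Pbrv k i).PosDef := fun k hk i =>
    hPbrvPDaux (M - k) k (by omega) i
  have hGpd : ∀ k, k < M → ∀ i,
      ((Pbrv (k+1) i)⁻¹ + B k i * (R k i)⁻¹ * (B k i)ᵀ).PosDef := fun k hk i =>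
    ((hPbrvPD (k+1) hk i).inv.add_posSemidef (psd_BRB (hRpd k i) (B k i)))
  have hPbarPD : ∀ k, k < M → ∀ i, (Pbar (k+1) i).PosDef := fun k hk i => by
    rw [hPbar k hk i]; exact (hGpd k hk i).inv
  have hPbarInv : ∀ k, k < M → ∀ i,
      (Pbar (k+1) i)⁻¹ = (Pbrv (k+1) i)⁻¹ + B k i * (R k i)⁻¹ * (B k i)ᵀ := fun k hk i => by
    rw [hPbar k hk i]
    exact Matrix.nonsing_inv_nonsing_inv _ (pd_unit (hGpd k hk i))
  have hsumPD : ∀ k, k < M → ∀ i, (∑ j ∈ nbr i, ω i j • (Pbar (k+1) j)⁻¹).PosDef :=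
    fun k hk i => pd_sum ⟨i, hself i⟩ (ω i) (fun j hj => (hω i j hj).1)
      fun j hj => (hPbarPD k hk j).inv
  have hPmPD : ∀ k, k < M → ∀ i, (Pm (k+1) i).PosDef := fun k hk i => by
    rw [hPm k hk i]; exact (hsumPD k hk i).inv
  have hPmInv : ∀ k, k < M → ∀ j,
      (Pm (k+1) j)⁻¹ = ∑ l ∈ nbr j, ω j l • (Pbar (k+1) l)⁻¹ := fun k hk j => by
    rw [hPm k hk j]
    exact Matrix.nonsing_inv_nonsing_inv _ (pd_unit (hsumPD k hk j))
  -- pair swap condition for double sums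
  have hpair : ∀ (i j : Fin N),
      i ∈ (Finset.univ : Finset (Fin N)) ∧ j ∈ Finset.univ.filter (fun j => i ∈ nbr j)
        ↔ i ∈ nbr j ∧ j ∈ (Finset.univ : Finset (Fin N)) := by
    intro i j; simp
  -- row sums of the weights are at most one
  have homega_sum : ∀ i : Fin N,
      ∑ j ∈ Finset.univ.filter (fun j => i ∈ nbr j), ω j i ≤ 1 := by
    intro i
    have hcard : 0 < (Finset.univ.filter (fun l : Fin N => i ∈ nbr l)).card :=
      Finset.card_pos.2 ⟨i, by simp [hself i]⟩
    have hb : ∀ j ∈ Finset.univ.filter (fun j : Fin N => i ∈ nbr j),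
        ω j i ≤ 1 / ((Finset.univ.filter (fun l : Fin N => i ∈ nbr l)).card : ℝ) := by
      intro j hj
      exact (hω j i (Finset.mem_filter.1 hj).2).2
    calc ∑ j ∈ Finset.univ.filter (fun j : Fin N => i ∈ nbr j), ω j i
        ≤ ∑ _j ∈ Finset.univ.filter (fun j : Fin N => i ∈ nbr j),
            1 / ((Finset.univ.filter (fun l : Fin N => i ∈ nbr l)).card : ℝ) :=
          Finset.sum_le_sum hb
      _ = ((Finset.univ.filter (fun l : Fin N => i ∈ nbr l)).card : ℝ)
            * (1 / ((Finset.univ.filter (fun l : Fin N => i ∈ nbr l)).card : ℝ)) := by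
          rw [Finset.sum_const, nsmul_eq_mul]
      _ = 1 := by
          rw [mul_one_div]
          exact div_self (by positivity)
  -- the true state is the sum of the virtual states
  have hxsum : ∀ k, k ≤ M → x k = ∑ i, xv k i := by
    intro k
    induction k with
    | zero =>
      intro _
      rw [Finset.sum_congr rfl (fun i _ => hxv0 i), Finset.sum_const, Finset.card_univ,
        Fintype.card_fin, ← Nat.cast_smul_eq_nsmul ℝ, smul_smul,
        mul_inv_cancel₀ hNne, one_smul]
    | succ k ih =>
      intro hk1
      have hkM : k < M := by omega
      have ihx := ih (by omega)
      have inner : ∀ j : Fin N,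
          (∑ i ∈ nbr j, ω j i • ((Pbar (k+1) i)⁻¹ *ᵥ (Pm (k+1) j *ᵥ (A k *ᵥ xv k j))))
            = A k *ᵥ xv k j := by
        intro j
        rw [Finset.sum_congr rfl (fun i _ =>
          (Matrix.smul_mulVec (ω j i) ((Pbar (k+1) i)⁻¹)
            (Pm (k+1) j *ᵥ (A k *ᵥ xv k j))).symm),
          ← sum_mulVec', ← hPmInv k hkM j, Matrix.mulVec_mulVec,
          Matrix.nonsing_inv_mul _ (pd_unit (hPmPD k hkM j)), Matrix.one_mulVec]
      have hzsum : (∑ i : Fin N, ∑ j ∈ Finset.univ.filter (fun j => i ∈ nbr j),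
          ω j i • ((Pbar (k+1) i)⁻¹ *ᵥ (Pm (k+1) j *ᵥ (A k *ᵥ xv k j))))
            = A k *ᵥ x k := by
        rw [Finset.sum_comm' hpair, Finset.sum_congr rfl (fun j _ => inner j),
          ← mulVec_sum', ← ihx]
      rw [hx k hkM, Finset.sum_congr rfl (fun i _ => hxv k hkM i),
        Finset.sum_add_distrib, hzsum]
  -- per-step inequality
  have hstep : ∀ k, k < M →
      (∑ i, u k i ⬝ᵥ (R k i *ᵥ u k i))
        + ∑ i, xv (k+1) i ⬝ᵥ (Pbrv (k+1) i *ᵥ xv (k+1) i)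
      ≤ (∑ i, xv k i ⬝ᵥ (Pbrv k i *ᵥ xv k i))
        - (N:ℝ) * ∑ i, xv k i ⬝ᵥ (Q k *ᵥ xv k i) := by
    intro k hk
    have hzw : ∀ i : Fin N,
        (∑ j ∈ Finset.univ.filter (fun j => i ∈ nbr j),
          ω j i • ((Pbar (k+1) i)⁻¹ *ᵥ (Pm (k+1) j *ᵥ (A k *ᵥ xv k j))))
        = ((Pbrv (k+1) i)⁻¹ + B k i * (R k i)⁻¹ * (B k i)ᵀ) *ᵥ
            (∑ j ∈ Finset.univ.filter (fun j => i ∈ nbr j),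
              ω j i • (Pm (k+1) j *ᵥ (A k *ᵥ xv k j))) := by
      intro i
      rw [← hPbarInv k hk i, mulVec_sum']
      exact Finset.sum_congr rfl fun j _ => (Matrix.mulVec_smul _ _ _).symm
    have hEq : ∀ i : Fin N,
        u k i ⬝ᵥ (R k i *ᵥ u k i) + xv (k+1) i ⬝ᵥ (Pbrv (k+1) i *ᵥ xv (k+1) i)
        = (∑ j ∈ Finset.univ.filter (fun j => i ∈ nbr j),
            ω j i • (Pm (k+1) j *ᵥ (A k *ᵥ xv k j))) ⬝ᵥ
          (((Pbrv (k+1) i)⁻¹ + B k i * (R k i)⁻¹ * (B k i)ᵀ) *ᵥ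
            (∑ j ∈ Finset.univ.filter (fun j => i ∈ nbr j),
              ω j i • (Pm (k+1) j *ᵥ (A k *ᵥ xv k j)))) := by
      intro i
      have h1 := hxv k hk i
      have h2 := hu k hk i
      rw [hzw i] at h1 h2
      rw [h1]
      exact peragent (hPbrvPD (k+1) hk i) (hRpd k i) (B k i) _ (u k i) h2
    have hJen : (∑ i : Fin N,
        (∑ j ∈ Finset.univ.filter (fun j => i ∈ nbr j),
            ω j i • (Pm (k+1) j *ᵥ (A k *ᵥ xv k j))) ⬝ᵥ
          (((Pbrv (k+1) i)⁻¹ + B k i * (R k i)⁻¹ * (B k i)ᵀ) *ᵥ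
            (∑ j ∈ Finset.univ.filter (fun j => i ∈ nbr j),
              ω j i • (Pm (k+1) j *ᵥ (A k *ᵥ xv k j)))))
        ≤ ∑ j : Fin N, (Pm (k+1) j *ᵥ (A k *ᵥ xv k j)) ⬝ᵥ
            ((Pm (k+1) j)⁻¹ *ᵥ (Pm (k+1) j *ᵥ (A k *ᵥ xv k j))) := by
      have h1 : ∀ i : Fin N,
          (∑ j ∈ Finset.univ.filter (fun j => i ∈ nbr j),
              ω j i • (Pm (k+1) j *ᵥ (A k *ᵥ xv k j))) ⬝ᵥ
            (((Pbrv (k+1) i)⁻¹ + B k i * (R k i)⁻¹ * (B k i)ᵀ) *ᵥ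
              (∑ j ∈ Finset.univ.filter (fun j => i ∈ nbr j),
                ω j i • (Pm (k+1) j *ᵥ (A k *ᵥ xv k j))))
          ≤ ∑ j ∈ Finset.univ.filter (fun j => i ∈ nbr j),
              ω j i * ((Pm (k+1) j *ᵥ (A k *ᵥ xv k j)) ⬝ᵥ
                ((Pbar (k+1) i)⁻¹ *ᵥ (Pm (k+1) j *ᵥ (A k *ᵥ xv k j)))) := by
        intro i
        rw [← hPbarInv k hk i]
        have hw := wcs (Finset.univ.filter (fun j => i ∈ nbr j)) (fun j => ω j i)
          (fun j hj => le_of_lt (hω j i (Finset.mem_filter.1 hj).2).1)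
          ((hPbarPD k hk i).inv.posSemidef)
          (fun j => Pm (k+1) j *ᵥ (A k *ᵥ xv k j))
        refine le_trans hw ?_
        have hnn : 0 ≤ ∑ j ∈ Finset.univ.filter (fun j => i ∈ nbr j),
            ω j i * ((Pm (k+1) j *ᵥ (A k *ᵥ xv k j)) ⬝ᵥ
              ((Pbar (k+1) i)⁻¹ *ᵥ (Pm (k+1) j *ᵥ (A k *ᵥ xv k j)))) :=
          Finset.sum_nonneg fun j hj => mul_nonneg
            (le_of_lt (hω j i (Finset.mem_filter.1 hj).2).1)
            (psd_dot ((hPbarPD k hk i).inv.posSemidef) _)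
        exact mul_le_of_le_one_left hnn (homega_sum i)
      calc (∑ i : Fin N,
          (∑ j ∈ Finset.univ.filter (fun j => i ∈ nbr j),
              ω j i • (Pm (k+1) j *ᵥ (A k *ᵥ xv k j))) ⬝ᵥ
            (((Pbrv (k+1) i)⁻¹ + B k i * (R k i)⁻¹ * (B k i)ᵀ) *ᵥ
              (∑ j ∈ Finset.univ.filter (fun j => i ∈ nbr j),
                ω j i • (Pm (k+1) j *ᵥ (A k *ᵥ xv k j)))))
          ≤ ∑ i : Fin N, ∑ j ∈ Finset.univ.filter (fun j => i ∈ nbr j),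
              ω j i * ((Pm (k+1) j *ᵥ (A k *ᵥ xv k j)) ⬝ᵥ
                ((Pbar (k+1) i)⁻¹ *ᵥ (Pm (k+1) j *ᵥ (A k *ᵥ xv k j)))) :=
            Finset.sum_le_sum fun i _ => h1 i
        _ = ∑ j : Fin N, ∑ i ∈ nbr j,
              ω j i * ((Pm (k+1) j *ᵥ (A k *ᵥ xv k j)) ⬝ᵥ
                ((Pbar (k+1) i)⁻¹ *ᵥ (Pm (k+1) j *ᵥ (A k *ᵥ xv k j)))) :=
            Finset.sum_comm' hpair
        _ = ∑ j : Fin N, (Pm (k+1) j *ᵥ (A k *ᵥ xv k j)) ⬝ᵥ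
              ((Pm (k+1) j)⁻¹ *ᵥ (Pm (k+1) j *ᵥ (A k *ᵥ xv k j))) := by
            refine Finset.sum_congr rfl fun j _ => ?_
            rw [hPmInv k hk j, sum_mulVec', dot_sum_right]
            exact Finset.sum_congr rfl fun i _ => by
              rw [Matrix.smul_mulVec, dotProduct_smul, smul_eq_mul]
    have hfin : ∀ j : Fin N,
        (Pm (k+1) j *ᵥ (A k *ᵥ xv k j)) ⬝ᵥ
            ((Pm (k+1) j)⁻¹ *ᵥ (Pm (k+1) j *ᵥ (A k *ᵥ xv k j)))
        = xv k j ⬝ᵥ (Pbrv k j *ᵥ xv k j) - (N:ℝ) * (xv k j ⬝ᵥ (Q k *ᵥ xv k j)) := by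
      intro j
      rw [conj_dot]
      have e1 : (Pm (k+1) j)ᵀ * (Pm (k+1) j)⁻¹ * (Pm (k+1) j) = Pm (k+1) j := by
        rw [herm_tr (hPmPD k hk j).1, Matrix.mul_assoc,
          Matrix.nonsing_inv_mul _ (pd_unit (hPmPD k hk j)), Matrix.mul_one]
      rw [e1, conj_dot]
      have e2 : (A k)ᵀ * Pm (k+1) j * A k = Pbrv k j - (N:ℝ) • Q k := by
        rw [hPbrv k hk j]
        exact (add_sub_cancel_right _ _).symm
      rw [e2, Matrix.sub_mulVec, dotProduct_sub, Matrix.smul_mulVec,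
        dotProduct_smul, smul_eq_mul]
    calc (∑ i, u k i ⬝ᵥ (R k i *ᵥ u k i))
          + ∑ i, xv (k+1) i ⬝ᵥ (Pbrv (k+1) i *ᵥ xv (k+1) i)
        = ∑ i, (u k i ⬝ᵥ (R k i *ᵥ u k i)
            + xv (k+1) i ⬝ᵥ (Pbrv (k+1) i *ᵥ xv (k+1) i)) := Finset.sum_add_distrib.symm
      _ = ∑ i : Fin N,
            (∑ j ∈ Finset.univ.filter (fun j => i ∈ nbr j),
                ω j i • (Pm (k+1) j *ᵥ (A k *ᵥ xv k j))) ⬝ᵥ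
              (((Pbrv (k+1) i)⁻¹ + B k i * (R k i)⁻¹ * (B k i)ᵀ) *ᵥ
                (∑ j ∈ Finset.univ.filter (fun j => i ∈ nbr j),
                  ω j i • (Pm (k+1) j *ᵥ (A k *ᵥ xv k j)))) :=
          Finset.sum_congr rfl fun i _ => hEq i
      _ ≤ ∑ j : Fin N, (Pm (k+1) j *ᵥ (A k *ᵥ xv k j)) ⬝ᵥ
            ((Pm (k+1) j)⁻¹ *ᵥ (Pm (k+1) j *ᵥ (A k *ᵥ xv k j))) := hJen
      _ = ∑ j : Fin N, (xv k j ⬝ᵥ (Pbrv k j *ᵥ xv k j)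
            - (N:ℝ) * (xv k j ⬝ᵥ (Q k *ᵥ xv k j))) :=
          Finset.sum_congr rfl fun j _ => hfin j
      _ = (∑ i, xv k i ⬝ᵥ (Pbrv k i *ᵥ xv k i))
            - (N:ℝ) * ∑ i, xv k i ⬝ᵥ (Q k *ᵥ xv k i) := by
          rw [Finset.sum_sub_distrib, ← Finset.mul_sum]
  -- quadratic cost of the sum is at most N times the sum of quadratic costs
  have hQle : ∀ k, k ≤ M → ∀ (S : Matrix (Fin n) (Fin n) ℝ), S.PosSemidef →
      x k ⬝ᵥ (S *ᵥ x k) ≤ (N:ℝ) * ∑ i, xv k i ⬝ᵥ (S *ᵥ xv k i) := by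
    intro k hk S hS
    rw [hxsum k hk]
    have hw := wcs Finset.univ (fun _ : Fin N => (1:ℝ)) (fun _ _ => zero_le_one) hS
      (fun i => xv k i)
    simp only [one_smul, one_mul] at hw
    rw [Finset.sum_const, Finset.card_univ, Fintype.card_fin, nsmul_eq_mul, mul_one] at hw
    exact hw
  -- per-step cost bound
  have hcost : ∀ k, k < M →
      x k ⬝ᵥ (Q k *ᵥ x k) + ∑ i, u k i ⬝ᵥ (R k i *ᵥ u k i)
        ≤ (∑ i, xv k i ⬝ᵥ (Pbrv k i *ᵥ xv k i))
          - ∑ i, xv (k+1) i ⬝ᵥ (Pbrv (k+1) i *ᵥ xv (k+1) i) := by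
    intro k hk
    have h1 := hstep k hk
    have h2 := hQle k (le_of_lt hk) (Q k) (hQpd k).posSemidef
    linarith
  -- terminal bound
  have hterm : x M ⬝ᵥ (Q M *ᵥ x M) ≤ ∑ i, xv M i ⬝ᵥ (Pbrv M i *ᵥ xv M i) := by
    have h1 := hQle M le_rfl (Q M) (hQpd M).posSemidef
    have h2 : ∑ i, xv M i ⬝ᵥ (Pbrv M i *ᵥ xv M i)
        = (N:ℝ) * ∑ i, xv M i ⬝ᵥ (Q M *ᵥ xv M i) := by
      rw [Finset.mul_sum]
      refine Finset.sum_congr rfl fun i _ => ?_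
      rw [hPbrvM i, Matrix.smul_mulVec, dotProduct_smul, smul_eq_mul]
    linarith
  -- telescoping
  have htel : ∑ k ∈ Finset.range M,
      (x k ⬝ᵥ (Q k *ᵥ x k) + ∑ i, u k i ⬝ᵥ (R k i *ᵥ u k i))
      ≤ (∑ i, xv 0 i ⬝ᵥ (Pbrv 0 i *ᵥ xv 0 i))
        - ∑ i, xv M i ⬝ᵥ (Pbrv M i *ᵥ xv M i) := by
    calc ∑ k ∈ Finset.range M,
        (x k ⬝ᵥ (Q k *ᵥ x k) + ∑ i, u k i ⬝ᵥ (R k i *ᵥ u k i))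
        ≤ ∑ k ∈ Finset.range M,
            ((∑ i, xv k i ⬝ᵥ (Pbrv k i *ᵥ xv k i))
              - ∑ i, xv (k+1) i ⬝ᵥ (Pbrv (k+1) i *ᵥ xv (k+1) i)) :=
          Finset.sum_le_sum fun k hk => hcost k (Finset.mem_range.1 hk)
      _ = (∑ i, xv 0 i ⬝ᵥ (Pbrv 0 i *ᵥ xv 0 i))
            - ∑ i, xv M i ⬝ᵥ (Pbrv M i *ᵥ xv M i) :=
          Finset.sum_range_sub' (fun t => ∑ i, xv t i ⬝ᵥ (Pbrv t i *ᵥ xv t i)) M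
  -- initial value
  have hV0 : (∑ i, xv 0 i ⬝ᵥ (Pbrv 0 i *ᵥ xv 0 i))
      = (1 / (N : ℝ) ^ 2) * ∑ i, x 0 ⬝ᵥ (Pbrv 0 i *ᵥ x 0) := by
    rw [Finset.mul_sum]
    refine Finset.sum_congr rfl fun i _ => ?_
    rw [hxv0 i, Matrix.mulVec_smul, dotProduct_smul, smul_dotProduct,
      smul_eq_mul, smul_eq_mul]
    rw [one_div, sq, mul_inv]
    ring
  linarith [hterm, htel, hV0]
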